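/- For every real number c with 1/4 < c < 1, 1 − 2·∫_{t=c}^{1} ∫_{s=c/t}^{1} (1 − (c − 1 − s·t + s + t)/(s + t − 1)) ds dt = c − (3c − 1/2)·ln c − ((4c − 1)^{3/2}/3)·(arctan(1/√(4c − 1)) − arctan((2c − 1)/√(4c − 1))). -/

import Mathlib

open Real intervalIntegral

lemma Qpos' {c : ℝ} (hc0 : 1/4 < c) (t : ℝ) : 0 < t^2 - t + c := by
  nlinarith [sq_nonneg (2*t-1)]

lemma inner_eval (c : ℝ) (hc0 : 1/4 < c) {t : ℝ} (htc : c ≤ t) (ht1 : t ≤ 1) :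
    (∫ s in (c/t)..1, (1 - (c - 1 - s * t + s + t) / (s + t - 1))) =
      (t - c) - (t^2 - t + c) * (2 * Real.log t - Real.log (t^2 - t + c)) := by
  have ht0 : 0 < t := lt_of_lt_of_le (by linarith) htc
  have hQ : 0 < t^2 - t + c := Qpos' hc0 t
  have hct : c / t ≤ 1 := (div_le_one ht0).2 htc
  have huI : Set.uIcc (c/t) 1 = Set.Icc (c/t) 1 := Set.uIcc_of_le hct
  have hden : ∀ s ∈ Set.Icc (c/t) 1, 0 < s + t - 1 := by
    intro s hs
    have h1 : c / t ≤ s := hs.1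
    have : (t^2 - t + c)/t ≤ s + t - 1 := by
      rw [div_le_iff₀ ht0] at h1 ⊢
      nlinarith
    calc (0:ℝ) < (t^2 - t + c)/t := div_pos hQ ht0
      _ ≤ s + t - 1 := this
  have hderiv : ∀ s ∈ Set.uIcc (c/t) 1,
      HasDerivAt (fun s => t * s - (t^2 - t + c) * Real.log (s + t - 1))
        (1 - (c - 1 - s * t + s + t) / (s + t - 1)) s := by
    intro s hs
    rw [huI] at hs
    have hs0 : 0 < s + t - 1 := hden s hs
    have hlin : HasDerivAt (fun s : ℝ => s + t - 1) 1 s :=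
      ((hasDerivAt_id s).add_const t).sub_const 1
    have hlog : HasDerivAt (fun s : ℝ => Real.log (s + t - 1)) (1/(s + t - 1)) s := by
      have := (Real.hasDerivAt_log hs0.ne').comp s hlin
      simpa [Function.comp_def] using this
    have h1 : HasDerivAt (fun s : ℝ => t * s) t s := by
      simpa using (hasDerivAt_id s).const_mul t
    have := h1.sub (hlog.const_mul (t^2 - t + c))
    refine this.congr_deriv ?_
    have hne : s + t - 1 ≠ 0 := hs0.ne'
    field_simp
    ring
  have hint : IntervalIntegrable (fun s => 1 - (c - 1 - s * t + s + t) / (s + t - 1))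
      MeasureTheory.volume (c/t) 1 := by
    apply ContinuousOn.intervalIntegrable
    rw [huI]
    apply ContinuousOn.sub continuousOn_const
    apply ContinuousOn.div (by fun_prop) (by fun_prop)
    intro s hs
    exact (hden s hs).ne'
  rw [intervalIntegral.integral_eq_sub_of_hasDerivAt hderiv hint]
  have hval : c / t + t - 1 = (t^2 - t + c)/t := by field_simp; ring
  rw [hval, Real.log_div hQ.ne' ht0.ne']
  have : t * (c/t) = c := by field_simp
  rw [this]
  ring

lemma outer_deriv (c : ℝ) (hc0 : 1/4 < c) (r : ℝ) (hr0 : 0 < r) (hr2 : r^2 = 4*c-1)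
    {t : ℝ} (ht0 : 0 < t) :
    HasDerivAt (fun t => t^2/2 - c*t - 2*(t^3/3 - t^2/2 + c*t)*Real.log t
        + 2*(t^3/9 - t^2/4 + c*t)
        + (t^3/3 - t^2/2 + c*t - c/2 + 1/12)*Real.log (t^2-t+c)
        - (2*t^3/9 - t^2/3 + (4*c/3 - 1/6)*t)
        + (r^3/6) * Real.arctan ((2*t-1)/r))
      ((t - c) - (t^2 - t + c) * (2 * Real.log t - Real.log (t^2 - t + c))) t := by
  have hQ : 0 < t^2 - t + c := Qpos' hc0 t
  have h4c : (0:ℝ) < 4*c - 1 := by linarith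
  have hp2 : HasDerivAt (fun t : ℝ => t^2/2) ((2*t^1)/2) t := (hasDerivAt_pow 2 t).div_const 2
  have hct : HasDerivAt (fun t : ℝ => c*t) (c*1) t := (hasDerivAt_id' t).const_mul c
  have hP : HasDerivAt (fun t : ℝ => 2*(t^3/3 - t^2/2 + c*t)) (2*((3*t^2)/3 - (2*t^1)/2 + c*1)) t := by
    exact ((((hasDerivAt_pow 3 t).div_const 3).sub ((hasDerivAt_pow 2 t).div_const 2)).add
      ((hasDerivAt_id' t).const_mul c)).const_mul 2
  have hlogt : HasDerivAt Real.log t⁻¹ t := Real.hasDerivAt_log ht0.ne'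
  have h3 : HasDerivAt (fun t : ℝ => 2*(t^3/3 - t^2/2 + c*t)*Real.log t)
      (2*((3*t^2)/3 - (2*t^1)/2 + c*1) * Real.log t + 2*(t^3/3 - t^2/2 + c*t) * t⁻¹) t :=
    hP.mul hlogt
  have h4 : HasDerivAt (fun t : ℝ => 2*(t^3/9 - t^2/4 + c*t)) (2*((3*t^2)/9 - (2*t^1)/4 + c*1)) t :=
    ((((hasDerivAt_pow 3 t).div_const 9).sub ((hasDerivAt_pow 2 t).div_const 4)).add
      ((hasDerivAt_id' t).const_mul c)).const_mul 2
  have hQd : HasDerivAt (fun t : ℝ => t^2 - t + c) ((2*t^1) - 1) t := by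
    have := ((hasDerivAt_pow 2 t).sub (hasDerivAt_id' t)).add_const c
    simpa using this
  have hlogQ : HasDerivAt (fun t : ℝ => Real.log (t^2 - t + c)) ((t^2-t+c)⁻¹ * ((2*t^1) - 1)) t :=
    by have := (Real.hasDerivAt_log hQ.ne').comp t hQd; exact this
  have hP2 : HasDerivAt (fun t : ℝ => t^3/3 - t^2/2 + c*t - c/2 + 1/12)
      ((3*t^2)/3 - (2*t^1)/2 + c*1) t := by
    have := (((((hasDerivAt_pow 3 t).div_const 3).sub ((hasDerivAt_pow 2 t).div_const 2)).add
      ((hasDerivAt_id' t).const_mul c)).sub_const (c/2)).add_const (1/12)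
    simpa using this
  have h5 : HasDerivAt (fun t : ℝ => (t^3/3 - t^2/2 + c*t - c/2 + 1/12)*Real.log (t^2-t+c))
      (((3*t^2)/3 - (2*t^1)/2 + c*1) * Real.log (t^2-t+c)
        + (t^3/3 - t^2/2 + c*t - c/2 + 1/12) * ((t^2-t+c)⁻¹ * ((2*t^1) - 1))) t :=
    hP2.mul hlogQ
  have h6 : HasDerivAt (fun t : ℝ => 2*t^3/9 - t^2/3 + (4*c/3 - 1/6)*t)
      ((2*(3*t^2))/9 - (2*t^1)/3 + (4*c/3 - 1/6)*1) t := by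
    have := ((((hasDerivAt_pow 3 t).const_mul 2).div_const 9).sub ((hasDerivAt_pow 2 t).div_const 3)).add
      ((hasDerivAt_id' t).const_mul (4*c/3 - 1/6))
    exact this.congr_deriv (by norm_num)
  have hlin2 : HasDerivAt (fun t : ℝ => (2*t-1)/r) (2/r) t := by
    have := (((hasDerivAt_id' t).const_mul 2).sub_const 1).div_const r
    simpa using this
  have harctan : HasDerivAt (fun t : ℝ => (r^3/6) * Real.arctan ((2*t-1)/r))
      ((r^3/6) * ((1/(1+((2*t-1)/r)^2)) * (2/r))) t := by
    exact (((Real.hasDerivAt_arctan ((2*t-1)/r)).comp t hlin2)).const_mul (r^3/6)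
  have hval : (r^3/6) * ((1/(1+((2*t-1)/r)^2)) * (2/r)) = (4*c-1)^2/(12*(t^2-t+c)) := by
    have h1 : 1+((2*t-1)/r)^2 = (4*(t^2-t+c))/r^2 := by
      rw [div_pow, hr2]
      field_simp
      ring
    have hr4 : (4*c-1)^2 = r^4 := by rw [← hr2]; ring
    rw [h1, hr4]
    field_simp
    ring
  rw [hval] at harctan
  have htotal := (((((hp2.sub hct).sub h3).add h4).add h5).sub h6).add harctan
  refine htotal.congr_deriv ?_
  have hne1 : t ≠ 0 := ht0.ne'
  have hne2 : t^2 - t + c ≠ 0 := hQ.ne'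
  have hne3 : t * (t - 1) + c ≠ 0 := by rw [show t * (t - 1) + c = t^2 - t + c by ring]; exact hQ.ne'
  field_simp
  ring

theorem iterated_integral_closed_form (c : ℝ) (hc0 : 1 / 4 < c) (hc : c < 1) :
    1 - 2 * (∫ t in c..1, ∫ s in (c / t)..1,
        (1 - (c - 1 - s * t + s + t) / (s + t - 1))) =
      c - (3 * c - 1 / 2) * Real.log c -
        ((4 * c - 1) ^ ((3 : ℝ) / 2) / 3) *
          (Real.arctan (1 / Real.sqrt (4 * c - 1)) -
            Real.arctan ((2 * c - 1) / Real.sqrt (4 * c - 1))) := by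
  have hc0' : 1/4 < c := hc0
  have h4c : (0:ℝ) < 4*c - 1 := by linarith
  set r := Real.sqrt (4*c-1) with hrdef
  have hr0 : 0 < r := Real.sqrt_pos.2 h4c
  have hr2 : r^2 = 4*c-1 := Real.sq_sqrt h4c.le
  have h32 : (4*c-1) ^ ((3:ℝ)/2) = r^3 := by
    rw [← hr2, ← Real.rpow_natCast r 2, ← Real.rpow_mul hr0.le, ← Real.rpow_natCast r 3]
    norm_num
  have hc0pos : (0:ℝ) < c := by linarith
  have hEq : Set.EqOn (fun t => ∫ s in (c/t)..1, (1 - (c - 1 - s * t + s + t) / (s + t - 1)))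
      (fun t => (t - c) - (t^2 - t + c) * (2 * Real.log t - Real.log (t^2 - t + c)))
      (Set.uIcc c 1) := by
    rw [Set.uIcc_of_le hc.le]
    intro t ht
    exact inner_eval c hc0' ht.1 ht.2
  rw [intervalIntegral.integral_congr hEq]
  have hder : ∀ t ∈ Set.uIcc c 1,
      HasDerivAt (fun t => t^2/2 - c*t - 2*(t^3/3 - t^2/2 + c*t)*Real.log t
        + 2*(t^3/9 - t^2/4 + c*t)
        + (t^3/3 - t^2/2 + c*t - c/2 + 1/12)*Real.log (t^2-t+c)
        - (2*t^3/9 - t^2/3 + (4*c/3 - 1/6)*t)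
        + (r^3/6) * Real.arctan ((2*t-1)/r))
      ((t - c) - (t^2 - t + c) * (2 * Real.log t - Real.log (t^2 - t + c))) t := by
    intro t ht
    rw [Set.uIcc_of_le hc.le] at ht
    exact outer_deriv c hc0' r hr0 hr2 (lt_of_lt_of_le hc0pos ht.1)
  have hint : IntervalIntegrable
      (fun t => (t - c) - (t^2 - t + c) * (2 * Real.log t - Real.log (t^2 - t + c)))
      MeasureTheory.volume c 1 := by
    apply ContinuousOn.intervalIntegrable
    rw [Set.uIcc_of_le hc.le]
    apply ContinuousOn.sub (by fun_prop)
    apply ContinuousOn.mul (by fun_prop)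
    apply ContinuousOn.sub
    · exact continuousOn_const.mul (ContinuousOn.log continuousOn_id
        (fun t ht => (lt_of_lt_of_le hc0pos ht.1).ne'))
    · exact ContinuousOn.log (by fun_prop) (fun t ht => (Qpos' hc0' t).ne')
  rw [intervalIntegral.integral_eq_sub_of_hasDerivAt hder hint]
  rw [h32]

  rw [show (1:ℝ)^2 - 1 + c = c by ring, show c^2 - c + c = c^2 by ring, Real.log_pow,
    Real.log_one, show (2:ℝ)*1 - 1 = 1 by ring]
  push_cast
  ring
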